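/- Let κ, a₁, a₂ > 0, f̄ ≥ 0, and let k ≥ (1/(κ·a₁))·(f̄ + a₂). Let l ≥ 1 and let μ₁,…,μ_l be reals and Δt₁,…,Δt_l > 0 with μ_i·Δt_i > −1 for every i, Σ_{i=1}^{l} Δt_i ≥ k, and Π_{i=1}^{l} (1 + μ_i·Δt_i) ≥ e^{−f̄}. Then Σ_{i=1}^{l} (μ_i + κ·a₁)·Δt_i ≥ a₂. -/

import Mathlib

/-- Core claim of Lemma 19 (a too-full warehouse empties): if the price
updates over a span of at least `k ≥ (1/(κa₁))(f̄ + a₂)` days multiply the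
price by factors `1 + μᵢΔtᵢ > 0` with `Δtᵢ > 0` and total factor at least
`e^{−f̄}`, then `Σ (μᵢ + κa₁)Δtᵢ ≥ a₂`. -/
theorem stmt18 (κ a₁ a₂ fbar k : ℝ)
    (hκ : 0 < κ) (ha₁ : 0 < a₁) (ha₂ : 0 < a₂)
    (hfbar : 0 ≤ fbar)
    (hk : 1 / (κ * a₁) * (fbar + a₂) ≤ k)
    (l : ℕ) (hl : 1 ≤ l)
    (μ Δt : ℕ → ℝ)
    (hΔt : ∀ i ∈ Finset.range l, 0 < Δt i)
    (hμΔt : ∀ i ∈ Finset.range l, -1 < μ i * Δt i)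
    (hsum : k ≤ ∑ i ∈ Finset.range l, Δt i)
    (hprod : Real.exp (-fbar) ≤ ∏ i ∈ Finset.range l, (1 + μ i * Δt i)) :
    a₂ ≤ ∑ i ∈ Finset.range l, (μ i + κ * a₁) * Δt i := by
  have hpos : ∀ i ∈ Finset.range l, (0:ℝ) < 1 + μ i * Δt i := by
    intro i hi; linarith [hμΔt i hi]
  have hlog : -fbar ≤ ∑ i ∈ Finset.range l, Real.log (1 + μ i * Δt i) := by
    have := Real.log_le_log (Real.exp_pos _) hprod
    rwa [Real.log_exp, Real.log_prod (fun i hi => (hpos i hi).ne')] at this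
  have hle : ∑ i ∈ Finset.range l, Real.log (1 + μ i * Δt i)
      ≤ ∑ i ∈ Finset.range l, μ i * Δt i := by
    apply Finset.sum_le_sum
    intro i hi
    have := Real.log_le_sub_one_of_pos (hpos i hi)
    linarith
  have hka : fbar + a₂ ≤ κ * a₁ * k := by
    have hκa : (0:ℝ) < κ * a₁ := mul_pos hκ ha₁
    rw [div_mul_eq_mul_div, one_mul, div_le_iff₀ hκa] at hk
    linarith [hk]
  have hsplit : ∑ i ∈ Finset.range l, (μ i + κ * a₁) * Δt i
      = (∑ i ∈ Finset.range l, μ i * Δt i) + κ * a₁ * ∑ i ∈ Finset.range l, Δt i := by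
    rw [Finset.mul_sum, ← Finset.sum_add_distrib]
    apply Finset.sum_congr rfl
    intro i _; ring
  have hκa : (0:ℝ) < κ * a₁ := mul_pos hκ ha₁
  have : κ * a₁ * k ≤ κ * a₁ * ∑ i ∈ Finset.range l, Δt i :=
    mul_le_mul_of_nonneg_left hsum hκa.le
  rw [hsplit]
  linarith
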